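/- Every group of prime order p is DRR-detecting: for any S ⊆ C_p, if the only automorphism of C_p fixing S setwise is the identity, then the automorphism group of Cay(C_p, S) is exactly the regular group of order p. -/

import Mathlib

def cayAut {R : Type*} [Group R] (S : Set R) : Subgroup (Equiv.Perm R) where
  carrier := {f | ∀ x y : R, x * y⁻¹ ∈ S ↔ f x * (f y)⁻¹ ∈ S}
  one_mem' := by intro x y; rfl
  mul_mem' := by
    intro f g hf hg x y
    simpa using (hg x y).trans (hf (g x) (g y))
  inv_mem' := by
    intro f hf x y
    simpa using (hf (f⁻¹ x) (f⁻¹ y)).symm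

def rtrans {R : Type*} [Group R] : R →* Equiv.Perm R where
  toFun r := Equiv.mulRight r⁻¹
  map_one' := by ext x; simp
  map_mul' r s := by ext x; simp [mul_assoc]




/-- groups of prime order are DRR-detecting: if no nontrivial automorphism
fixes `S` setwise, then every automorphism of `Cay(R,S)` is a right translation. -/
theorem stmt9 {R : Type*} [Group R] [Finite R] (p : ℕ) (hp : p.Prime)
    (hcard : Nat.card R = p) (S : Set R)
    (hfix : ∀ φ : MulAut R, φ '' S = S → φ = 1) :
    ∀ f : Equiv.Perm R, (∀ x y : R, x * y⁻¹ ∈ S ↔ f x * (f y)⁻¹ ∈ S) →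
      ∃ r : R, ∀ v : R, f v = v * r := by
  intro f hf
  classical
  haveI hp1 : Fact p.Prime := ⟨hp⟩
  -- commutativity of R
  have hcyc : IsCyclic R := isCyclic_of_prime_card hcard
  have hcomm : ∀ a b : R, a * b = b * a := by
    obtain ⟨g, hg⟩ := hcyc.exists_generator
    intro a b
    obtain ⟨m, rfl⟩ := hg a
    obtain ⟨n, rfl⟩ := hg b
    exact Commute.zpow_zpow_self g m n
  set G : Subgroup (Equiv.Perm R) := cayAut S with hG
  have hθmem : ∀ r : R, rtrans r ∈ G := by
    intro r x y
    show x * y⁻¹ ∈ S ↔ (x * r⁻¹) * (y * r⁻¹)⁻¹ ∈ S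
    rw [mul_inv_rev, inv_inv, mul_assoc, inv_mul_cancel_left]
  set θ : R →* ↥G := rtrans.codRestrict G hθmem with hθ
  have hθapp : ∀ (r x : R), ((θ r : ↥G) : Equiv.Perm R) x = x * r⁻¹ := fun r x => rfl
  have hθinj : Function.Injective θ := by
    intro r s h
    have := congrArg (fun (g : ↥G) => ((g : Equiv.Perm R) 1)⁻¹) h
    simpa [hθapp] using this
  set P : Subgroup ↥G := θ.range with hP
  have hcardP : Nat.card ↥P = p := by
    rw [← hcard]
    exact (Nat.card_congr (MonoidHom.ofInjective hθinj).toEquiv).symm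
  -- card facts
  have hdvdG : p ∣ Nat.card ↥G := hcardP ▸ Subgroup.card_subgroup_dvd_card P
  have hGdvd : Nat.card ↥G ∣ Nat.factorial p := by
    have h1 : Nat.card ↥G ∣ Nat.card (Equiv.Perm R) := Subgroup.card_subgroup_dvd_card G
    have h2 : Nat.card (Equiv.Perm R) = Nat.factorial p := by
      haveI := Fintype.ofFinite R
      rw [Nat.card_eq_fintype_card, Fintype.card_perm, ← Nat.card_eq_fintype_card, hcard]
    rwa [h2] at h1
  have hnp2 : ¬ p ^ 2 ∣ Nat.card ↥G := by
    intro h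
    have h3 : p ^ 2 ∣ Nat.factorial p := h.trans hGdvd
    have h5 : Nat.factorial p = p * Nat.factorial (p - 1) := (Nat.mul_factorial_pred hp.pos.ne').symm
    rw [h5, pow_two] at h3
    have h4 : p ∣ Nat.factorial (p - 1) := (mul_dvd_mul_iff_left hp.pos.ne').mp h3
    have h6 : p ≤ p - 1 := (Nat.Prime.dvd_factorial hp).mp h4
    have := hp.two_le
    omega
  have hG0 : Nat.card ↥G ≠ 0 := Nat.card_pos.ne'
  have hv : (Nat.card ↥G).factorization p = 1 := by
    have h1 : 1 ≤ (Nat.card ↥G).factorization p := by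
      rw [← Nat.Prime.pow_dvd_iff_le_factorization hp hG0, pow_one]
      exact hdvdG
    have h2 : ¬ 2 ≤ (Nat.card ↥G).factorization p := by
      rw [← Nat.Prime.pow_dvd_iff_le_factorization hp hG0]
      exact hnp2
    omega
  set Psyl : Sylow p ↥G := Sylow.ofCard P (by rw [hcardP, hv, pow_one]) with hPsyl
  have hPsylP : (Psyl : Subgroup ↥G) = P := rfl
  -- key: the normalizer of P is P
  have hNorm : Subgroup.normalizer (P : Set ↥G) ≤ P := by
    intro g hg
    set c : R := (g : Equiv.Perm R) 1 with hc
    set g' : ↥G := θ c * g with hg'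
    have hg'mem : g' ∈ Subgroup.normalizer (P : Set ↥G) :=
      Subgroup.mul_mem _ (Subgroup.le_normalizer ⟨c, rfl⟩) hg
    have h1 : (g' : Equiv.Perm R) 1 = 1 := by
      show ((θ c * g : ↥G) : Equiv.Perm R) 1 = 1
      rw [Subgroup.coe_mul, Equiv.Perm.mul_apply, hθapp]
      exact mul_inv_cancel ((g : Equiv.Perm R) 1)
    have h1inv : ((g'⁻¹ : ↥G) : Equiv.Perm R) 1 = 1 := by
      rw [Subgroup.coe_inv, Equiv.Perm.inv_def]
      exact (Equiv.symm_apply_eq _).mpr h1.symm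
    have hmul : ∀ a b : R, (g' : Equiv.Perm R) (a * b) =
        (g' : Equiv.Perm R) a * (g' : Equiv.Perm R) b := by
      intro a b
      have hb : g' * θ b⁻¹ * g'⁻¹ ∈ P :=
        (Subgroup.mem_normalizer_iff.mp hg'mem (θ b⁻¹)).mp ⟨b⁻¹, rfl⟩
      obtain ⟨s, hs⟩ := hb
      have hev : ∀ x : R, x * s⁻¹ =
          (g' : Equiv.Perm R) (((θ b⁻¹ : ↥G) : Equiv.Perm R)
            (((g'⁻¹ : ↥G) : Equiv.Perm R) x)) := by
        intro x
        have h := congrArg (fun u : ↥G => (u : Equiv.Perm R) x) hs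
        simpa [hθapp] using h
      have e1 := hev 1
      rw [h1inv, hθapp, inv_inv, one_mul, one_mul] at e1
      have e2 := hev ((g' : Equiv.Perm R) a)
      rw [Subgroup.coe_inv, Equiv.Perm.inv_def, Equiv.symm_apply_apply, hθapp, inv_inv] at e2
      rw [← e2, ← e1]
    -- package as a group automorphism
    set φ : MulAut R := MulEquiv.mk' ((g' : Equiv.Perm R) : R ≃ R) hmul with hφdef
    have hproperty : ∀ x y : R, x * y⁻¹ ∈ S ↔
        (g' : Equiv.Perm R) x * ((g' : Equiv.Perm R) y)⁻¹ ∈ S := g'.2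
    have hSfix : ∀ x : R, x ∈ S ↔ (g' : Equiv.Perm R) x ∈ S := by
      intro x
      have h := hproperty x 1
      simpa [h1] using h
    have hφS : φ '' S = S := by
      ext z
      constructor
      · rintro ⟨x, hx, rfl⟩
        exact (hSfix x).mp hx
      · intro hz
        refine ⟨φ.symm z, ?_, φ.apply_symm_apply z⟩
        have h := hSfix (φ.symm z)
        rw [show (g' : Equiv.Perm R) (φ.symm z) = z from φ.apply_symm_apply z] at h
        exact h.mpr hz
    have hφ1 : φ = 1 := hfix φ hφS
    have hg'id : θ c * g = 1 := by
      rw [← hg']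
      apply Subtype.ext
      apply Equiv.ext
      intro x
      have h : φ x = x := by rw [hφ1]; rfl
      exact h
    have hgP : g = (θ c)⁻¹ := eq_inv_of_mul_eq_one_right hg'id
    rw [hgP, ← map_inv]
    exact ⟨c⁻¹, rfl⟩
  -- P is abelian, so its normalizer is contained in its centralizer
  have hcent : Subgroup.normalizer (Psyl : Set ↥G) ≤
      Subgroup.centralizer (Psyl : Set ↥G) := by
    intro g hg
    obtain ⟨r, rfl⟩ := hNorm hg
    rw [Subgroup.mem_centralizer_iff]
    intro h hh
    obtain ⟨s, rfl⟩ : h ∈ P := hh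
    rw [← map_mul, ← map_mul, hcomm]
  haveI : (Psyl : Subgroup ↥G).FiniteIndex := inferInstance
  obtain ⟨K, hKnormal, hpK, hcompl⟩ :
      ∃ K : Subgroup ↥G, K.Normal ∧ ¬ p ∣ Nat.card K ∧
        Subgroup.IsComplement' K P :=
    ⟨(MonoidHom.transferSylow Psyl hcent).ker, MonoidHom.normal_ker _,
      MonoidHom.not_dvd_card_ker_transferSylow Psyl hcent,
      MonoidHom.ker_transferSylow_isComplement' Psyl hcent⟩
  -- the orbit of 1 under K is a subgroup of R
  have hsmul : ∀ (k : ↥K) (x : R), k • x = ((k : ↥G) : Equiv.Perm R) x :=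
    fun _ _ => rfl
  have hconj : ∀ (r : R) (k : ↥K), θ r * ↑k * (θ r)⁻¹ ∈ K :=
    fun r k => hKnormal.conj_mem (↑k) k.2 (θ r)
  set T : Subgroup R :=
    { carrier := MulAction.orbit ↥K (1 : R)
      one_mem' := MulAction.mem_orbit_self 1
      mul_mem' := by
        rintro a b ⟨k, hk⟩ ⟨m, hm⟩
        have hk' : ((k : ↥G) : Equiv.Perm R) 1 = a := hk
        have hm' : ((m : ↥G) : Equiv.Perm R) 1 = b := hm
        have hc : θ b⁻¹ * ↑k * θ b ∈ K := by
          have h := hconj b⁻¹ k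
          rwa [← map_inv, inv_inv] at h
        refine MulAction.mem_orbit_iff.mpr ⟨(⟨θ b⁻¹ * ↑k * θ b, hc⟩ : ↥K) * m, ?_⟩
        rw [hsmul]
        show ((θ b⁻¹ * ↑k * θ b * ↑m : ↥G) : Equiv.Perm R) 1 = a * b
        simp only [Subgroup.coe_mul, Equiv.Perm.mul_apply]
        rw [hm', hθapp b b, mul_inv_cancel, hk', hθapp b⁻¹ a, inv_inv]
      inv_mem' := by
        rintro a ⟨k, hk⟩
        have hk' : ((k : ↥G) : Equiv.Perm R) 1 = a := hk
        have hc : θ a * ↑(k⁻¹) * θ a⁻¹ ∈ K := by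
          have h := hconj a k⁻¹
          rwa [← map_inv] at h
        refine MulAction.mem_orbit_iff.mpr ⟨(⟨θ a * ↑(k⁻¹) * θ a⁻¹, hc⟩ : ↥K), ?_⟩
        rw [hsmul]
        show ((θ a * ↑(k⁻¹) * θ a⁻¹ : ↥G) : Equiv.Perm R) 1 = a⁻¹
        simp only [Subgroup.coe_mul, Subgroup.coe_inv, Equiv.Perm.mul_apply]
        rw [hθapp a⁻¹ 1, inv_inv, one_mul]
        have hinv : (((k : ↥G) : Equiv.Perm R))⁻¹ a = 1 := by
          rw [← hk', Equiv.Perm.inv_def, Equiv.symm_apply_apply]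
        rw [hinv, hθapp a 1, one_mul] } with hT
  have hTdvd : Nat.card ↥T ∣ p := hcard ▸ Subgroup.card_subgroup_dvd_card T
  have hcardO : Nat.card ↥T = Nat.card (MulAction.orbit ↥K (1 : R)) := rfl
  rcases (Nat.Prime.eq_one_or_self_of_dvd hp _ hTdvd) with hT1 | hTp
  · -- orbit of 1 is trivial: K fixes 1, hence everything, so K = ⊥
    have hfix1 : ∀ k : ↥K, ((k : ↥G) : Equiv.Perm R) 1 = 1 := by
      intro k
      have hmem : ((k : ↥G) : Equiv.Perm R) 1 ∈ T := ⟨k, rfl⟩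
      rw [Subgroup.card_eq_one.mp hT1, Subgroup.mem_bot] at hmem
      exact hmem
    have hfixall : ∀ (k : ↥K) (x : R), ((k : ↥G) : Equiv.Perm R) x = x := by
      intro k x
      have hc : θ x * ↑k * θ x⁻¹ ∈ K := by
        have h := hconj x k
        rwa [← map_inv] at h
      have h := hfix1 ⟨θ x * ↑k * θ x⁻¹, hc⟩
      simp only [Subgroup.coe_mul, Equiv.Perm.mul_apply] at h
      rw [hθapp x⁻¹ 1, inv_inv, one_mul, hθapp x] at h
      exact mul_inv_eq_one.mp h
    have hKbot : K = ⊥ := by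
      rw [Subgroup.eq_bot_iff_forall]
      intro k hk
      apply Subtype.ext
      apply Equiv.ext
      intro x
      exact hfixall ⟨k, hk⟩ x
    have hPtop : P = ⊤ := by
      rw [hKbot] at hcompl
      exact Subgroup.isComplement'_bot_left.mp hcompl
    have hfP : (⟨f, hf⟩ : ↥G) ∈ P := by
      rw [hPtop]; trivial
    obtain ⟨r, hr⟩ := hfP
    refine ⟨r⁻¹, fun v => ?_⟩
    have h := congrArg (fun u : ↥G => (u : Equiv.Perm R) v) hr
    simpa [hθapp] using h.symm
  · -- orbit of 1 is everything: p divides card K, contradiction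
    exfalso
    apply hpK
    rw [← hTp, hcardO]
    have hcardK : Nat.card (MulAction.orbit ↥K (1 : R)) *
        Nat.card (MulAction.stabilizer ↥K (1 : R)) = Nat.card ↥K := by
      rw [← Nat.card_prod]
      exact Nat.card_congr (MulAction.orbitProdStabilizerEquivGroup ↥K 1)
    exact ⟨_, hcardK.symm⟩
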